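/- Tight advice lower bound for string guessing with known history (Theorem 13). Let q ≥ 2, n ≥ 1, and b be natural numbers and let 0 < α < (q−1)/q. Let μ be a randomized algorithm reading b bits of advice for the n-round guessing game over Fin q (a PMF over pairs (φ, g) as below), whose cost on input x : Fin n → Fin q for a pair (φ,g) is the number of rounds i in which the answer y_i of (φ,g) differs from x_i. If E_{(φ,g)∼μ}[cost on x] ≤ α·n for every input x, then b ≥ K_{1/q}(1−α)·n (which equals (1 − h_q(α))·n·log₂ q, where h_q is the q-ary entropy function). -/

import Mathlib

open Classical

/-- The binary-divergence-type function `K_y(x) = x log₂(x/y) + (1-x) log₂((1-x)/(1-y))`. -/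
noncomputable def Kfun (y x : ℝ) : ℝ :=
  x * Real.logb 2 (x / y) + (1 - x) * Real.logb 2 ((1 - x) / (1 - y))

/-- A deterministic algorithm reading `b` bits of advice for an `n`-round guessing game
with known history over the alphabet `Fin q`. -/
abbrev AdviceAlg (n q b : ℕ) : Type :=
  ((Fin n → Fin q) → Fin (2 ^ b)) ×
    (Fin (2 ^ b) → (i : Fin n) → ({j : Fin n // j < i} → Fin q) → Fin q)

lemma guess_sub_injective {n q : ℕ} [NeZero q]
    (s : (i : Fin n) → ({j : Fin n // j < i} → Fin q) → Fin q) :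
    Function.Injective
      (fun x : Fin n → Fin q => fun i => x i - s i (fun j => x j.1)) := by
  intro x x' h
  have key : ∀ m : ℕ, ∀ i : Fin n, i.1 = m → x i = x' i := by
    intro m
    induction m using Nat.strong_induction_on with
    | _ m ih =>
      intro i him
      have hhist : (fun j : {j : Fin n // j < i} => x j.1) =
          (fun j : {j : Fin n // j < i} => x' j.1) := by
        funext j
        exact ih j.1.1 (him ▸ j.2) j.1 rfl
      have h1 := congrFun h i
      simp only at h1
      rw [hhist] at h1
      exact sub_left_injective h1
  funext i
  exact key i.1 i rfl

lemma sum_prod_guess {n q : ℕ} [NeZero q]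
    (s : (i : Fin n) → ({j : Fin n // j < i} → Fin q) → Fin q) (w : Fin q → ℝ) :
    ∑ x : Fin n → Fin q, ∏ i, w (x i - s i (fun j => x j.1)) = (∑ v, w v) ^ n := by
  have hbij := Finite.injective_iff_bijective.mp (guess_sub_injective s)
  calc ∑ x : Fin n → Fin q, ∏ i, w (x i - s i (fun j => x j.1))
      = ∑ y : Fin n → Fin q, ∏ i, w (y i) :=
        Function.Bijective.sum_comp hbij (fun y => ∏ i, w (y i))
    _ = (∑ v, w v) ^ n := (Fintype.sum_pow w n).symm


/-- Tight advice lower bound for string guessing with known history (Theorem 13):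
a randomized algorithm reading `b` bits of advice whose expected number of wrong guesses
is at most `α·n` on every input string over `Fin q` satisfies `b ≥ K_{1/q}(1−α)·n`. -/
theorem string_guessing_lower_bound
    {q n b : ℕ} (hq : 2 ≤ q) (hn : 1 ≤ n)
    (α : ℝ) (hα0 : 0 < α) (hα1 : α < ((q : ℝ) - 1) / (q : ℝ))
    (μ : AdviceAlg n q b → ℝ) (hμ0 : ∀ a, 0 ≤ μ a) (hμ1 : ∑ a, μ a = 1)
    (hperf : ∀ x : Fin n → Fin q,
      (∑ alg, μ alg *
          ((Finset.univ.filter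
            (fun i : Fin n => alg.2 (alg.1 x) i (fun j => x j.1) ≠ x i)).card : ℝ))
        ≤ α * n) :
    (b : ℝ) ≥ Kfun (1 / (q : ℝ)) (1 - α) * n := by
  haveI : NeZero q := ⟨by omega⟩
  -- basic numeric facts
  have hq2 : (2 : ℝ) ≤ (q : ℝ) := by exact_mod_cast hq
  have hq0 : (0 : ℝ) < (q : ℝ) := by linarith
  have hqm1 : (0 : ℝ) < (q : ℝ) - 1 := by linarith
  have hα1' : α < 1 := hα1.trans ((div_lt_one hq0).2 (by linarith))
  have h1α : (0 : ℝ) < 1 - α := by linarith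
  have hαq : α * (q : ℝ) < (q : ℝ) - 1 := by
    have := (lt_div_iff₀ hq0).mp hα1
    linarith
  have hc0 : (0 : ℝ) < α / ((q : ℝ) - 1) := by positivity
  have hclt : α / ((q : ℝ) - 1) < 1 - α := by
    rw [div_lt_iff₀ hqm1]; nlinarith
  -- weight function
  set c : ℝ := α / ((q : ℝ) - 1) with hc
  set w : Fin q → ℝ := fun d => if d = 0 then 1 - α else c with hw
  have hwpos : ∀ v, 0 < w v := by
    intro v; by_cases h : v = 0 <;> simp [hw, h, h1α, hc0]
  have hsumw : ∑ v : Fin q, w v = 1 := by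
    rw [hw]
    rw [Finset.sum_ite, Finset.sum_const, Finset.sum_const]
    rw [Finset.filter_eq' Finset.univ (0 : Fin q)]
    simp only [Finset.mem_univ, if_true, Finset.card_singleton]
    rw [Finset.filter_ne' Finset.univ (0 : Fin q), Finset.card_erase_of_mem (Finset.mem_univ _)]
    simp only [Finset.card_univ, Fintype.card_fin, one_smul, smul_eq_mul]
    have : ((q - 1 : ℕ) : ℝ) = (q : ℝ) - 1 := by
      have : (1:ℕ) ≤ q := by omega
      push_cast [this]; ring
    rw [nsmul_eq_mul, this, hc]
    field_simp
    ring
  -- per-strategy weight of inputs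
  have key : ∀ (g : (i : Fin n) → ({j : Fin n // j < i} → Fin q) → Fin q),
      ∑ x : Fin n → Fin q, ∏ i, w (x i - g i (fun j => x j.1)) = 1 := by
    intro g; rw [sum_prod_guess g w, hsumw, one_pow]
  -- full algorithm weight
  set P : AdviceAlg n q b → (Fin n → Fin q) → ℝ :=
    fun alg x => ∏ i, w (x i - alg.2 (alg.1 x) i (fun j => x j.1)) with hP
  have hPpos : ∀ alg x, 0 < P alg x := by
    intro alg x; exact Finset.prod_pos (fun i _ => hwpos _)
  have hPsum : ∀ alg : AdviceAlg n q b, ∑ x : Fin n → Fin q, P alg x ≤ (2 : ℝ) ^ b := by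
    intro alg
    have hle : ∀ x : Fin n → Fin q,
        P alg x ≤ ∑ a : Fin (2 ^ b), ∏ i, w (x i - alg.2 a i (fun j => x j.1)) := by
      intro x
      exact Finset.single_le_sum
        (f := fun a => ∏ i, w (x i - alg.2 a i (fun j => x j.1)))
        (fun a _ => le_of_lt (Finset.prod_pos (fun i _ => hwpos _))) (Finset.mem_univ (alg.1 x))
    calc ∑ x : Fin n → Fin q, P alg x
        ≤ ∑ x : Fin n → Fin q, ∑ a : Fin (2 ^ b), ∏ i, w (x i - alg.2 a i (fun j => x j.1)) :=
          Finset.sum_le_sum (fun x _ => hle x)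
      _ = ∑ a : Fin (2 ^ b), ∑ x : Fin n → Fin q, ∏ i, w (x i - alg.2 a i (fun j => x j.1)) :=
          Finset.sum_comm
      _ = ∑ _a : Fin (2 ^ b), (1 : ℝ) := by
          exact Finset.sum_congr rfl (fun a _ => key (alg.2 a))
      _ = (2 : ℝ) ^ b := by simp
  -- mixture
  set Q : (Fin n → Fin q) → ℝ := fun x => ∑ alg, μ alg * P alg x with hQ
  have hQpos : ∀ x, 0 < Q x := by
    intro x
    obtain ⟨a0, ha0⟩ : ∃ a0, 0 < μ a0 := by
      by_contra hcon
      push_neg at hcon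
      have : ∑ a, μ a ≤ 0 := Finset.sum_nonpos (fun a _ => hcon a)
      linarith [hμ1 ▸ this]
    have h1 : μ a0 * P a0 x ≤ Q x :=
      Finset.single_le_sum (fun a _ => mul_nonneg (hμ0 a) (hPpos a x).le) (Finset.mem_univ a0)
    exact lt_of_lt_of_le (mul_pos ha0 (hPpos a0 x)) h1
  have hQsum : ∑ x : Fin n → Fin q, Q x ≤ (2 : ℝ) ^ b := by
    calc ∑ x : Fin n → Fin q, Q x = ∑ alg, μ alg * ∑ x : Fin n → Fin q, P alg x := by
          rw [hQ]; rw [Finset.sum_comm]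
          exact Finset.sum_congr rfl (fun alg _ => (Finset.mul_sum _ _ _).symm)
      _ ≤ ∑ alg, μ alg * (2 : ℝ) ^ b :=
          Finset.sum_le_sum (fun alg _ =>
            mul_le_mul_of_nonneg_left (hPsum alg) (hμ0 alg))
      _ = (2 : ℝ) ^ b := by rw [← Finset.sum_mul, hμ1, one_mul]
  -- log of P: n log(1-α) + cost * D
  set L1 : ℝ := Real.log (1 - α) with hL1
  set D : ℝ := Real.log c - Real.log (1 - α) with hD
  have hDneg : D < 0 := by
    rw [hD]; have := Real.log_lt_log hc0 hclt; linarith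
  set cost : AdviceAlg n q b → (Fin n → Fin q) → ℝ := fun alg x =>
    ((Finset.univ.filter
      (fun i : Fin n => alg.2 (alg.1 x) i (fun j => x j.1) ≠ x i)).card : ℝ) with hcost
  have hlogP : ∀ alg x, Real.log (P alg x) = n * L1 + cost alg x * D := by
    intro alg x
    rw [hP]
    rw [Real.log_prod (fun i _ => (hwpos _).ne')]
    have hterm : ∀ i : Fin n,
        Real.log (w (x i - alg.2 (alg.1 x) i (fun j => x j.1))) =
          L1 + (if alg.2 (alg.1 x) i (fun j => x j.1) ≠ x i then D else 0) := by
      intro i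
      by_cases h : alg.2 (alg.1 x) i (fun j => x j.1) = x i
      · have hz : x i - alg.2 (alg.1 x) i (fun j => x j.1) = 0 := by
          rw [sub_eq_zero, h]
        simp [hw, hz, h, hL1]
      · have hz : x i - alg.2 (alg.1 x) i (fun j => x j.1) ≠ 0 := by
          rw [Ne, sub_eq_zero]
          exact fun hh => h hh.symm
        simp [hw, hz, h, hD, hL1]
    rw [Finset.sum_congr rfl (fun i _ => hterm i), Finset.sum_add_distrib]
    rw [Finset.sum_const, Finset.card_univ, Fintype.card_fin, nsmul_eq_mul]
    congr 1
    rw [← Finset.sum_filter, Finset.sum_const, nsmul_eq_mul, hcost]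
  -- Jensen over algorithms, for each x
  have hconc : ConcaveOn ℝ (Set.Ioi (0:ℝ)) Real.log := strictConcaveOn_log_Ioi.concaveOn
  have step2 : ∀ x, n * L1 + (α * n) * D ≤ Real.log (Q x) := by
    intro x
    have hJ : ∑ alg, μ alg • Real.log (P alg x) ≤ Real.log (∑ alg, μ alg • P alg x) :=
      hconc.le_map_sum (fun a _ => hμ0 a) hμ1 (fun a _ => hPpos a x)
    simp only [smul_eq_mul] at hJ
    have hEq : ∑ alg, μ alg * Real.log (P alg x) = n * L1 + D * ∑ alg, μ alg * cost alg x := by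
      calc ∑ alg, μ alg * Real.log (P alg x)
          = ∑ alg, (μ alg * (n * L1) + D * (μ alg * cost alg x)) := by
            refine Finset.sum_congr rfl (fun alg _ => ?_)
            rw [hlogP]; ring
        _ = (∑ alg, μ alg) * (n * L1) + D * ∑ alg, μ alg * cost alg x := by
            rw [Finset.sum_add_distrib, ← Finset.sum_mul, ← Finset.mul_sum]
        _ = n * L1 + D * ∑ alg, μ alg * cost alg x := by rw [hμ1, one_mul]
    have hcostle : ∑ alg, μ alg * cost alg x ≤ α * n := hperf x
    have : (α * n) * D ≤ D * ∑ alg, μ alg * cost alg x := by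
      rw [mul_comm (α * n) D]
      exact mul_le_mul_of_nonpos_left hcostle hDneg.le
    calc n * L1 + (α * n) * D ≤ ∑ alg, μ alg * Real.log (P alg x) := by rw [hEq]; linarith
      _ ≤ Real.log (Q x) := hJ
  -- Jensen over uniform x
  have hcard : (Fintype.card (Fin n → Fin q) : ℝ) = (q : ℝ) ^ n := by
    rw [Fintype.card_fun]; push_cast; simp
  have hqn0 : (0 : ℝ) < (q : ℝ) ^ n := by positivity
  have step1 : ∑ x : Fin n → Fin q, ((q:ℝ)^n)⁻¹ * Real.log (Q x) ≤
      Real.log ((2:ℝ)^b / (q:ℝ)^n) := by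
    have hwsum : ∑ _x : Fin n → Fin q, ((q:ℝ)^n)⁻¹ = 1 := by
      rw [Finset.sum_const, Finset.card_univ, nsmul_eq_mul, hcard]
      field_simp
    have hJ : ∑ x : Fin n → Fin q, ((q:ℝ)^n)⁻¹ • Real.log (Q x) ≤
        Real.log (∑ x : Fin n → Fin q, ((q:ℝ)^n)⁻¹ • Q x) :=
      hconc.le_map_sum (fun x _ => by positivity) hwsum (fun x _ => hQpos x)
    simp only [smul_eq_mul] at hJ
    refine hJ.trans (Real.log_le_log ?_ ?_)
    · apply Finset.sum_pos (fun x _ => mul_pos (by positivity) (hQpos x))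
      exact Finset.univ_nonempty
    · rw [← Finset.mul_sum, div_eq_inv_mul]
      exact mul_le_mul_of_nonneg_left hQsum (by positivity)
  -- combine
  have hmain : n * L1 + (α * n) * D ≤ (b : ℝ) * Real.log 2 - n * Real.log q := by
    have h1 : ∑ x : Fin n → Fin q, ((q:ℝ)^n)⁻¹ * Real.log (Q x) ≥
        n * L1 + (α * n) * D := by
      have := Finset.sum_le_sum (fun x (_ : x ∈ Finset.univ) =>
        mul_le_mul_of_nonneg_left (step2 x) (le_of_lt (by positivity :
          (0:ℝ) < ((q:ℝ)^n)⁻¹)))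
      calc n * L1 + (α * n) * D
          = ∑ _x : Fin n → Fin q, ((q:ℝ)^n)⁻¹ * (n * L1 + (α * n) * D) := by
            rw [Finset.sum_const, Finset.card_univ, nsmul_eq_mul, hcard]
            field_simp
        _ ≤ ∑ x : Fin n → Fin q, ((q:ℝ)^n)⁻¹ * Real.log (Q x) := this
    have h2 : Real.log ((2:ℝ)^b / (q:ℝ)^n) = (b : ℝ) * Real.log 2 - n * Real.log q := by
      rw [Real.log_div (by positivity) (by positivity), Real.log_pow, Real.log_pow]
    rw [h2] at step1
    linarith [h1.trans step1]
  -- final algebra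
  have hlog2 : (0 : ℝ) < Real.log 2 := Real.log_pos (by norm_num)
  have hKval : Kfun (1 / (q : ℝ)) (1 - α) * Real.log 2 =
      Real.log q + L1 + α * D := by
    rw [Kfun]
    have e1 : (1 - α) / (1 / (q:ℝ)) = (1 - α) * q := by field_simp
    have e2 : (1 - (1 - α)) = α := by ring
    have e3 : (1 - 1 / (q:ℝ)) = ((q:ℝ) - 1) / q := by field_simp
    rw [e1, e2, e3]
    have e4 : α / (((q:ℝ) - 1) / q) = c * q := by rw [hc]; field_simp
    rw [e4]
    rw [Real.logb, Real.logb]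
    rw [Real.log_mul (by linarith) (by positivity), Real.log_mul (by positivity) (by positivity)]
    field_simp
    rw [hL1, hD]
    ring
  have hKn : Kfun (1 / (q : ℝ)) (1 - α) * n * Real.log 2 ≤ (b : ℝ) * Real.log 2 := by
    have : Kfun (1 / (q : ℝ)) (1 - α) * n * Real.log 2 =
        n * (Real.log q + L1 + α * D) := by
      rw [mul_assoc, mul_comm (n:ℝ) (Real.log 2), ← mul_assoc, hKval]; ring
    rw [this]
    nlinarith [hmain]
  exact le_of_mul_le_mul_right hKn hlog2
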